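/- If A and B are countably perfectly meager sets in perfect Polish spaces X and Y respectively, then A × B is countably perfectly meager in X × Y. -/

import Mathlib

open Set
open Filter Topology

/-- An `Fσ` set: a countable union of closed sets. -/
def IsFsigma {X : Type*} [TopologicalSpace X] (F : Set X) : Prop :=
  ∃ s : ℕ → Set X, (∀ n, IsClosed (s n)) ∧ F = ⋃ n, s n

/-- A perfect set in the classical sense: nonempty, closed, without isolated points. -/
def PerfectSet {X : Type*} [TopologicalSpace X] (P : Set X) : Prop :=
  Perfect P ∧ P.Nonempty

/-- A Cantor set: a subset homeomorphic to the Cantor space `2^ℕ`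
(hence nonempty and compact). -/
def IsCantorSet {X : Type*} [TopologicalSpace X] (K : Set X) : Prop :=
  Nonempty ((ℕ → Bool) ≃ₜ K)

/-- `F` is meager relative to the subspace `P`. -/
def MeagerIn {X : Type*} [TopologicalSpace X] (F P : Set X) : Prop :=
  IsMeagre ((↑) ⁻¹' F : Set P)

/-- `A` is countably perfectly meager in `X`. -/
def CPM {X : Type*} [TopologicalSpace X] (A : Set X) : Prop :=
  ∀ P : ℕ → Set X, (∀ n, PerfectSet (P n)) →
    ∃ F : Set X, IsFsigma F ∧ A ⊆ F ∧ ∀ n, MeagerIn F (P n)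

section Aux

open Function Filter Topology

lemma not_countable_cantorSpace : ¬ Countable (ℕ → Bool) := by
  intro h
  classical
  have ginj : Injective (fun s : Set ℕ => (fun n => decide (n ∈ s) : ℕ → Bool)) := by
    classical
    intro s t hst
    ext n
    simpa using congrFun hst n
  haveI : Countable (Set ℕ) := ginj.countable
  obtain ⟨f, hf⟩ := (countable_iff_exists_injective (Set ℕ)).mp inferInstance
  exact Function.cantor_injective f hf

variable {Z : Type*} [TopologicalSpace Z]

lemma isCantorSet_range [T2Space Z] {f : (ℕ → Bool) → Z}
    (hc : Continuous f) (hi : Injective f) : IsCantorSet (range f) := by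
  let e : (ℕ → Bool) ≃ range f := Equiv.ofInjective f hi
  have hce : Continuous (e : (ℕ → Bool) → range f) := Continuous.subtype_mk hc _
  exact ⟨Continuous.homeoOfEquivCompactToT2 (f := e) hce⟩

lemma IsCantorSet.isCompact {K : Set Z} (h : IsCantorSet K) : IsCompact K := by
  obtain ⟨e⟩ := h
  haveI : CompactSpace K := e.compactSpace
  exact isCompact_iff_compactSpace.mpr this

lemma IsCantorSet.nonempty {K : Set Z} (h : IsCantorSet K) : K.Nonempty := by
  obtain ⟨e⟩ := h
  exact ⟨e (fun _ => false), (e (fun _ => false)).2⟩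

lemma IsCantorSet.not_countable {K : Set Z} (h : IsCantorSet K) : ¬ K.Countable := by
  obtain ⟨e⟩ := h
  intro hc
  haveI : Countable K := hc.to_subtype
  exact not_countable_cantorSpace ((e.toEquiv).countable_iff.mpr this)

lemma IsCantorSet.perfect [T2Space Z] {K : Set Z} (h : IsCantorSet K) : Perfect K := by
  obtain ⟨e⟩ := id h
  refine ⟨h.isCompact.isClosed, ?_⟩
  intro x hx
  rw [accPt_iff_nhds]
  intro U hU
  set u : ℕ → Bool := e.symm ⟨x, hx⟩ with hu
  have hcont : Continuous (fun v : ℕ → Bool => ((e v : K) : Z)) :=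
    continuous_subtype_val.comp e.continuous
  set w : ℕ → (ℕ → Bool) := fun n => Function.update u n (!(u n)) with hw
  have hwt : Tendsto w atTop (𝓝 u) := by
    rw [tendsto_pi_nhds]
    intro k
    apply tendsto_nhds_of_eventually_eq
    filter_upwards [eventually_ge_atTop (k + 1)] with n hn
    have hkn : k ≠ n := by omega
    simp [hw, Function.update_of_ne hkn]
  have hxval : ((e u : K) : Z) = x := by
    rw [hu, e.apply_symm_apply]
  have htend : Tendsto (fun n => ((e (w n) : K) : Z)) atTop (𝓝 x) := by
    have := (hcont.tendsto u).comp hwt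
    rwa [hxval] at this
  have hev : ∀ᶠ n in atTop, ((e (w n) : K) : Z) ∈ U := htend.eventually_mem hU
  obtain ⟨n, hn⟩ := hev.exists
  refine ⟨((e (w n) : K) : Z), ⟨hn, (e (w n)).2⟩, ?_⟩
  intro hcon
  have : e (w n) = e u := by
    apply Subtype.ext
    rw [hxval, hcon]
  have hwn : w n = u := e.injective this
  have := congrFun hwn n
  simp [hw] at this

lemma IsCantorSet.perfectSet [T2Space Z] {K : Set Z} (h : IsCantorSet K) : PerfectSet K :=
  ⟨h.perfect, h.nonempty⟩

lemma Perfect.exists_isCantorSet_subset {Z : Type*} [TopologicalSpace Z] [PolishSpace Z]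
    {C : Set Z} (hC : Perfect C) (hne : C.Nonempty) :
    ∃ K, K ⊆ C ∧ IsCantorSet K := by
  haveI : T2Space Z := inferInstance
  letI := TopologicalSpace.upgradeIsCompletelyMetrizable Z
  obtain ⟨f, hrange, hc, hi⟩ := hC.exists_nat_bool_injection hne
  exact ⟨range f, hrange, isCantorSet_range hc hi⟩

lemma IsClosed.exists_isCantorSet_subset {Z : Type*} [TopologicalSpace Z] [PolishSpace Z]
    {C : Set Z} (hC : IsClosed C) (hunc : ¬ C.Countable) :
    ∃ K, K ⊆ C ∧ IsCantorSet K := by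
  haveI : T2Space Z := inferInstance
  obtain ⟨f, hrange, hc, hi⟩ := hC.exists_nat_bool_injection_of_not_countable hunc
  exact ⟨range f, hrange, isCantorSet_range hc hi⟩

/-- From the `CPM` property, derive the closed-sets-vs-Cantor-sets characterization. -/
lemma CPM.cantor {X : Type*} [TopologicalSpace X] [PolishSpace X] {A : Set X} (hA : CPM A)
    (C : ℕ → Set X) (hC : ∀ n, IsCantorSet (C n)) :
    ∃ E : ℕ → Set X, (∀ j, IsClosed (E j)) ∧ A ⊆ ⋃ j, E j ∧ ∀ n j, ¬ C n ⊆ E j := by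
  haveI : T2Space X := inferInstance
  obtain ⟨F, ⟨s, hscl, rfl⟩, hAF, hmeag⟩ := hA C (fun n => (hC n).perfectSet)
  refine ⟨s, hscl, hAF, ?_⟩
  intro n j hsub
  have hcl : IsClosed (C n) := (hC n).isCompact.isClosed
  haveI : PolishSpace (C n) := hcl.polishSpace
  letI := TopologicalSpace.upgradeIsCompletelyMetrizable (C n)
  haveI : Nonempty (C n) := (hC n).nonempty.to_subtype
  have huniv : IsMeagre (univ : Set (C n)) := by
    refine (hmeag n).mono ?_
    intro z _
    exact Set.mem_preimage.mpr (Set.mem_iUnion.mpr ⟨j, hsub z.2⟩)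
  have hres : (∅ : Set (C n)) ∈ residual (C n) := by
    simpa [IsMeagre] using huniv
  exact Set.not_nonempty_empty ((dense_of_mem_residual hres).nonempty)

/-- Key decomposition for a Cantor set in a product. -/
lemma cantor_prod_cases {X Y : Type*} [TopologicalSpace X] [PolishSpace X]
    [TopologicalSpace Y] [PolishSpace Y] {K : Set (X × Y)} (hK : IsCantorSet K) :
    (∃ x D, IsCantorSet D ∧ ∀ y ∈ D, (x, y) ∈ K) ∨
      (∃ C, IsCantorSet C ∧ C ⊆ Prod.fst '' K) := by
  haveI : T2Space X := inferInstance
  haveI : T2Space Y := inferInstance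
  have hKcl : IsClosed K := hK.isCompact.isClosed
  by_cases h : ∃ x, ¬ {y | (x, y) ∈ K}.Countable
  · left
    obtain ⟨x, hx⟩ := h
    have hcl : IsClosed {y | (x, y) ∈ K} := hKcl.preimage (Continuous.prodMk_right x)
    obtain ⟨D, hDsub, hD⟩ := hcl.exists_isCantorSet_subset hx
    exact ⟨x, D, hD, fun y hy => hDsub hy⟩
  · right
    push_neg at h
    have hproj : ¬ (Prod.fst '' K).Countable := by
      intro hcnt
      apply hK.not_countable
      have hsub : K ⊆ ⋃ x ∈ Prod.fst '' K, Prod.mk x '' {y | (x, y) ∈ K} := by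
        rintro ⟨a, b⟩ hp
        refine Set.mem_biUnion ⟨(a, b), hp, rfl⟩ ⟨b, hp, rfl⟩
      exact Set.Countable.mono hsub (hcnt.biUnion (fun x _ => (h x).image _))
    have hprojcl : IsClosed (Prod.fst '' K) :=
      (hK.isCompact.image continuous_fst).isClosed
    obtain ⟨C, hCsub, hC⟩ := hprojcl.exists_isCantorSet_subset hproj
    exact ⟨C, hC, hCsub⟩

end Aux

theorem stmt16 {X Y : Type*} [TopologicalSpace X] [PolishSpace X]
    [TopologicalSpace Y] [PolishSpace Y]
    (hX : Perfect (Set.univ : Set X)) (hY : Perfect (Set.univ : Set Y))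
    (A : Set X) (B : Set Y) (hA : CPM A) (hB : CPM B) :
    CPM (A ×ˢ B) := by
  classical
  haveI : T2Space X := inferInstance
  haveI : T2Space Y := inferInstance
  intro P hP
  obtain ⟨⟨x0, y0⟩, hp0⟩ := (hP 0).2
  haveI : Nonempty X := ⟨x0⟩
  haveI : Nonempty Y := ⟨y0⟩
  obtain ⟨KX, -, hKX⟩ := hX.exists_isCantorSet_subset univ_nonempty
  obtain ⟨KY, -, hKY⟩ := hY.exists_isCantorSet_subset univ_nonempty
  letI := TopologicalSpace.upgradeIsCompletelyMetrizable (X × Y)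
  -- dense sequences in each `P n`
  have hPol : ∀ n, PolishSpace (P n) := fun n => ((hP n).1.closed).polishSpace
  have hdense : ∀ n, ∃ d : ℕ → (P n), DenseRange d := by
    intro n
    haveI := hPol n
    haveI : Nonempty (P n) := (hP n).2.to_subtype
    exact TopologicalSpace.exists_dense_seq (P n)
  choose d hd using hdense
  -- Cantor sets inside `P n`, one for each center/radius
  have hK : ∀ n (i k : ℕ), ∃ K,
      K ⊆ closure (Metric.ball ((d n i : X × Y)) (1 / (k + 1)) ∩ P n) ∧ IsCantorSet K := by
    intro n i k
    have hr : (0 : ℝ) < 1 / (k + 1) := by positivity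
    have := (hP n).1.closure_nhds_inter (d n i) (d n i).2
      (Metric.mem_ball_self hr) Metric.isOpen_ball
    exact this.1.exists_isCantorSet_subset this.2
  choose K hKsub hKcantor using hK
  -- decomposition: pick a Cantor witness on one side for each K n i k
  have hchoice : ∀ n i k, ∃ (C : Set X) (D : Set Y), IsCantorSet C ∧ IsCantorSet D ∧
      ((∃ x, ∀ y ∈ D, (x, y) ∈ K n i k) ∨ C ⊆ Prod.fst '' K n i k) := by
    intro n i k
    rcases cantor_prod_cases (hKcantor n i k) with ⟨x, D, hD, hsub⟩ | ⟨C, hC, hsub⟩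
    · exact ⟨KX, D, hKX, hD, Or.inl ⟨x, hsub⟩⟩
    · exact ⟨C, KY, hC, hKY, Or.inr hsub⟩
  choose CX CY hCX hCY hprop using hchoice
  -- apply the Cantor characterizations of CPM for A and B
  let σ : ℕ × ℕ × ℕ ≃ ℕ := Denumerable.eqv (ℕ × ℕ × ℕ)
  obtain ⟨E, hEcl, hAE, hEnot⟩ := hA.cantor
    (fun m => CX (σ.symm m).1 (σ.symm m).2.1 (σ.symm m).2.2)
    (fun m => hCX _ _ _)
  obtain ⟨G, hGcl, hBG, hGnot⟩ := hB.cantor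
    (fun m => CY (σ.symm m).1 (σ.symm m).2.1 (σ.symm m).2.2)
    (fun m => hCY _ _ _)
  -- the Fσ set
  let τ : ℕ × ℕ ≃ ℕ := Denumerable.eqv (ℕ × ℕ)
  refine ⟨⋃ m, (E (τ.symm m).1 ×ˢ G (τ.symm m).2), ⟨_, ?_, rfl⟩, ?_, ?_⟩
  · exact fun m => (hEcl _).prod (hGcl _)
  · rintro ⟨a, b⟩ ⟨ha, hb⟩
    obtain ⟨j, hj⟩ := Set.mem_iUnion.mp (hAE ha)
    obtain ⟨k, hk⟩ := Set.mem_iUnion.mp (hBG hb)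
    exact Set.mem_iUnion.mpr ⟨τ (j, k), by simp [τ, Equiv.symm_apply_apply, Set.mem_prod, hj, hk]⟩
  -- meagerness in each P n
  intro n
  unfold MeagerIn
  rw [Set.preimage_iUnion]
  apply isMeagre_iUnion
  intro m
  set j := (τ.symm m).1
  set k' := (τ.symm m).2
  have hclosed : IsClosed ((↑) ⁻¹' (E j ×ˢ G k') : Set (P n)) :=
    ((hEcl j).prod (hGcl k')).preimage continuous_subtype_val
  have hint : interior ((↑) ⁻¹' (E j ×ˢ G k') : Set (P n)) = ∅ := by
    by_contra hne
    obtain ⟨z, hz⟩ := Set.nonempty_iff_ne_empty.mpr hne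
    have hS : ((↑) ⁻¹' (E j ×ˢ G k') : Set (P n)) ∈ 𝓝 z := mem_interior_iff_mem_nhds.mp hz
    rw [nhds_subtype_eq_comap] at hS
    obtain ⟨U, hU, hUsub⟩ := Filter.mem_comap.mp hS
    obtain ⟨ε, hε, hball⟩ := Metric.mem_nhds_iff.mp hU
    obtain ⟨kk, hkk⟩ := exists_nat_one_div_lt (half_pos hε)
    set r : ℝ := 1 / (kk + 1) with hrdef
    have hrpos : (0 : ℝ) < r := by positivity
    obtain ⟨i, hi⟩ := Metric.denseRange_iff.mp (hd n) z r hrpos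
    -- K n i kk ⊆ E j ×ˢ G k'
    have hKEG : K n i kk ⊆ E j ×ˢ G k' := by
      intro w hw
      have hwcl := hKsub n i kk hw
      have hwP : w ∈ P n := by
        have : w ∈ closure (P n) :=
          closure_mono Set.inter_subset_right hwcl
        rwa [(hP n).1.closed.closure_eq] at this
      have hwb : dist w (d n i : X × Y) ≤ r := by
        have : w ∈ closure (Metric.ball (d n i : X × Y) r) :=
          closure_mono Set.inter_subset_left hwcl
        have := Metric.closure_ball_subset_closedBall this
        rwa [Metric.mem_closedBall] at this
      have hdz : dist (d n i : X × Y) (z : X × Y) < r := by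
        rw [dist_comm]
        simpa [Subtype.dist_eq] using hi
      have hwU : w ∈ U := by
        apply hball
        rw [Metric.mem_ball]
        calc dist w (z : X × Y) ≤ dist w (d n i : X × Y) + dist (d n i : X × Y) (z : X × Y) :=
              dist_triangle _ _ _
          _ < r + r := by linarith
          _ < ε := by
              have : r < ε / 2 := hkk
              linarith
      have : (⟨w, hwP⟩ : P n) ∈ ((↑) ⁻¹' U : Set (P n)) := hwU
      exact hUsub this
    -- contradiction with the choice of witnesses
    rcases hprop n i kk with ⟨x, hxD⟩ | hsub
    · refine hGnot (σ (n, i, kk)) k' ?_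
      simp only [σ, Equiv.symm_apply_apply]
      intro y hy
      exact (hKEG (hxD y hy)).2
    · refine hEnot (σ (n, i, kk)) j ?_
      simp only [σ, Equiv.symm_apply_apply]
      intro a ha
      obtain ⟨p, hp, hpa⟩ := hsub ha
      have := (hKEG hp).1
      rwa [hpa] at this
  have hnd : IsNowhereDense ((↑) ⁻¹' (E j ×ˢ G k') : Set (P n)) :=
    hclosed.isNowhereDense_iff.mpr hint
  rw [isMeagre_iff_countable_union_isNowhereDense]
  exact ⟨{((↑) ⁻¹' (E j ×ˢ G k') : Set (P n))}, by simpa using hnd,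
    Set.countable_singleton _, by simp⟩
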